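/- Let n = 2m be even, let f : 𝔽₂ⁿ → 𝔽₂ be a bent function, and let c ≥ 1 be an integer. Then f is an affine extractor for dimension m + c with bias at most 2^{−c}. In particular, f is an affine disperser for dimension m + 1. -/

import Mathlib

open scoped Classical

/-- The bias of a Boolean function `f` restricted to a (nonempty) subset `S` of its
finite domain: `|(1/|S|) ∑_{x ∈ S} (-1)^{f(x)}|`. -/
noncomputable def biasSet {E : Type*} [Fintype E] (f : E → ZMod 2) (S : Set E) : ℝ :=
  |∑ x ∈ S.toFinset, (-1 : ℝ) ^ (f x).val| / (S.toFinset.card : ℝ)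

/-- `f : 𝔽₂ⁿ → 𝔽₂` is bent if all its Fourier coefficients
`f̂(α) = ∑_x (-1)^{f(x) + ⟨α, x⟩}` have the same absolute value. -/
def IsBent {n : ℕ} (f : (Fin n → ZMod 2) → ZMod 2) : Prop :=
  ∀ α β : Fin n → ZMod 2,
    |∑ x : Fin n → ZMod 2, (-1 : ℝ) ^ (f x + ∑ i, α i * x i).val| =
    |∑ x : Fin n → ZMod 2, (-1 : ℝ) ^ (f x + ∑ i, β i * x i).val|

namespace BentAux

lemma zmod2_cases (a : ZMod 2) : a = 0 ∨ a = 1 := by fin_cases a <;> [exact Or.inl rfl; exact Or.inr rfl]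

noncomputable def χ (a : ZMod 2) : ℝ := (-1 : ℝ) ^ a.val

lemma χ_add (a b : ZMod 2) : χ (a + b) = χ a * χ b := by
  rcases zmod2_cases a with rfl | rfl <;> rcases zmod2_cases b with rfl | rfl <;>
    simp [χ, ZMod.val_one, (by decide : (1 + 1 : ZMod 2) = 0)]

lemma χ_zero : χ 0 = 1 := by simp [χ]

lemma χ_one : χ 1 = -1 := by simp [χ, ZMod.val_one]

lemma abs_χ (a : ZMod 2) : |χ a| = 1 := by
  rcases zmod2_cases a with rfl | rfl <;> simp [χ, ZMod.val_one]

lemma χ_sq (a : ZMod 2) : χ a * χ a = 1 := by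
  rcases zmod2_cases a with rfl | rfl <;> simp [χ, ZMod.val_one]

variable {n : ℕ}

def ip (α x : Fin n → ZMod 2) : ZMod 2 := ∑ i, α i * x i

lemma ip_add_left (α β x : Fin n → ZMod 2) : ip (α + β) x = ip α x + ip β x := by
  simp [ip, add_mul, Finset.sum_add_distrib]

lemma ip_add_right (α x y : Fin n → ZMod 2) : ip α (x + y) = ip α x + ip α y := by
  simp [ip, mul_add, Finset.sum_add_distrib]

lemma ip_comm (α x : Fin n → ZMod 2) : ip α x = ip x α := by
  simp [ip, mul_comm]

/-- Every linear functional is an inner product with some vector. -/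
lemma dual_repr (φ : Module.Dual (ZMod 2) (Fin n → ZMod 2)) :
    ∃ α : Fin n → ZMod 2, ∀ x, φ x = ip α x := by
  refine ⟨fun i => φ (fun j => if i = j then 1 else 0), fun x => ?_⟩
  rw [LinearMap.pi_apply_eq_sum_univ φ x]
  simp [ip, mul_comm, smul_eq_mul]

/-- Separation: if `z ∉ V` there is `α` orthogonal to `V` with `⟨α, z⟩ = 1`. -/
lemma sep (V : Submodule (ZMod 2) (Fin n → ZMod 2)) {z : Fin n → ZMod 2} (hz : z ∉ V) :
    ∃ α : Fin n → ZMod 2, (∀ v ∈ V, ip α v = 0) ∧ ip α z = 1 := by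
  have hz' : V.mkQ z ≠ 0 := by
    simpa [Submodule.Quotient.mk_eq_zero] using hz
  have : ¬ (∀ ψ : Module.Dual (ZMod 2) ((Fin n → ZMod 2) ⧸ V), ψ (V.mkQ z) = 0) := by
    rw [Module.forall_dual_apply_eq_zero_iff]
    exact hz'
  push_neg at this
  obtain ⟨ψ, hψ⟩ := this
  obtain ⟨α, hα⟩ := dual_repr (ψ.comp V.mkQ)
  have h1 : ∀ v ∈ V, ip α v = 0 := by
    intro v hv
    rw [← hα]
    simp [(Submodule.Quotient.mk_eq_zero V).mpr hv]
  have h2 : ip α z ≠ 0 := by rw [← hα]; exact hψ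
  rcases zmod2_cases (ip α z) with h | h
  · exact absurd h h2
  · exact ⟨α, h1, h⟩

lemma vec_add_self (x : Fin n → ZMod 2) : x + x = 0 := by
  have : x + x = (2 : ZMod 2) • x := by rw [two_smul]
  rw [this, show (2 : ZMod 2) = 0 by decide, zero_smul]

lemma sum_chi_univ_ne (z : Fin n → ZMod 2) (hz : z ≠ 0) :
    ∑ α : Fin n → ZMod 2, χ (ip α z) = 0 := by
  have hz' : z ∉ (⊥ : Submodule (ZMod 2) (Fin n → ZMod 2)) := by simpa using hz
  obtain ⟨α₀, -, hα₀⟩ := sep ⊥ hz'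
  have key : ∑ α : Fin n → ZMod 2, χ (ip α z)
      = ∑ α : Fin n → ZMod 2, χ (ip (α₀ + α) z) :=
    (Fintype.sum_equiv (Equiv.addLeft α₀) _ _ (fun α => rfl)).symm
  have : ∀ α, χ (ip (α₀ + α) z) = - χ (ip α z) := by
    intro α
    rw [ip_add_left, χ_add, hα₀, χ_one]; ring
  have h2 : ∑ α : Fin n → ZMod 2, χ (ip α z) = -∑ α : Fin n → ZMod 2, χ (ip α z) := by
    conv_lhs => rw [key, Finset.sum_congr rfl (fun α _ => this α)]
    rw [Finset.sum_neg_distrib]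
  linarith

lemma sum_chi_univ (z : Fin n → ZMod 2) :
    ∑ α : Fin n → ZMod 2, χ (ip α z) = if z = 0 then (2 : ℝ) ^ n else 0 := by
  split_ifs with h
  · subst h
    have : ∀ α : Fin n → ZMod 2, χ (ip α 0) = 1 := by
      intro α; simp [ip, χ_zero, χ]
    rw [Finset.sum_congr rfl (fun α _ => this α)]
    simp [Finset.card_univ]
  · exact sum_chi_univ_ne z h

lemma parseval (f : (Fin n → ZMod 2) → ZMod 2) :
    ∑ α : Fin n → ZMod 2, (∑ x, χ (f x + ip α x)) ^ 2 = (2 : ℝ) ^ n * 2 ^ n := by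
  have step1 : ∀ α : Fin n → ZMod 2, (∑ x, χ (f x + ip α x)) ^ 2
      = ∑ x, ∑ y, χ (f x) * χ (f y) * χ (ip α (x + y)) := by
    intro α
    rw [sq, Finset.sum_mul_sum]
    refine Finset.sum_congr rfl fun x _ => Finset.sum_congr rfl fun y _ => ?_
    rw [χ_add, χ_add, ip_add_right, χ_add]; ring
  calc ∑ α : Fin n → ZMod 2, (∑ x, χ (f x + ip α x)) ^ 2
      = ∑ α : Fin n → ZMod 2, ∑ x, ∑ y, χ (f x) * χ (f y) * χ (ip α (x + y)) := by
        exact Finset.sum_congr rfl fun α _ => step1 α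
    _ = ∑ x, ∑ y, χ (f x) * χ (f y) * ∑ α : Fin n → ZMod 2, χ (ip α (x + y)) := by
        rw [Finset.sum_comm]
        refine Finset.sum_congr rfl fun x _ => ?_
        rw [Finset.sum_comm]
        refine Finset.sum_congr rfl fun y _ => ?_
        rw [Finset.mul_sum]
    _ = ∑ x : Fin n → ZMod 2, χ (f x) * χ (f x) * (2 : ℝ) ^ n := by
        refine Finset.sum_congr rfl fun x _ => ?_
        rw [Finset.sum_eq_single x]
        · rw [sum_chi_univ, if_pos (vec_add_self x)]
        · intro y _ hyx
          rw [sum_chi_univ, if_neg, mul_zero]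
          intro h
          apply hyx
          calc y = x + x + y := by rw [vec_add_self, zero_add]
            _ = x + (x + y) := by rw [add_assoc]
            _ = x := by rw [h, add_zero]
        · intro h; exact absurd (Finset.mem_univ x) h
    _ = (2 : ℝ) ^ n * 2 ^ n := by
        have h1 : ∀ x : Fin n → ZMod 2, χ (f x) * χ (f x) * (2:ℝ)^n = (2:ℝ)^n :=
          fun x => by rw [χ_sq, one_mul]
        rw [Finset.sum_congr rfl fun x _ => h1 x, Finset.sum_const, Finset.card_univ]
        simp only [Fintype.card_fun, ZMod.card, Fintype.card_fin, nsmul_eq_mul]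
        push_cast
        ring

lemma bent_abs {m : ℕ} (f : (Fin (2 * m) → ZMod 2) → ZMod 2) (hf : IsBent f)
    (α : Fin (2 * m) → ZMod 2) :
    |∑ x : Fin (2 * m) → ZMod 2, χ (f x + ip α x)| = 2 ^ m := by
  have hEq : ∀ β : Fin (2 * m) → ZMod 2,
      |∑ x : Fin (2 * m) → ZMod 2, χ (f x + ip β x)|
        = |∑ x : Fin (2 * m) → ZMod 2, χ (f x + ip α x)| := fun β => hf β α
  have hP := parseval (n := 2 * m) f
  have hsum : ∑ β : Fin (2 * m) → ZMod 2, (∑ x, χ (f x + ip β x)) ^ 2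
      = (2 : ℝ) ^ (2 * m) * |∑ x : Fin (2 * m) → ZMod 2, χ (f x + ip α x)| ^ 2 := by
    have : ∀ β : Fin (2 * m) → ZMod 2, (∑ x, χ (f x + ip β x)) ^ 2
        = |∑ x : Fin (2 * m) → ZMod 2, χ (f x + ip α x)| ^ 2 := by
      intro β; rw [← sq_abs, hEq β]
    rw [Finset.sum_congr rfl fun β _ => this β, Finset.sum_const, Finset.card_univ]
    simp only [Fintype.card_fun, ZMod.card, Fintype.card_fin, nsmul_eq_mul]
    push_cast
    ring
  have h2 : |∑ x : Fin (2 * m) → ZMod 2, χ (f x + ip α x)| ^ 2 = ((2 : ℝ) ^ m) ^ 2 := by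
    have hpos : (0 : ℝ) < 2 ^ (2 * m) := by positivity
    have := hsum.symm.trans hP
    have h3 : ((2:ℝ) ^ m) ^ 2 = (2:ℝ) ^ (2 * m) := by
      rw [← pow_mul]; ring_nf
    nlinarith [this]
  calc |∑ x : Fin (2 * m) → ZMod 2, χ (f x + ip α x)|
      = Real.sqrt (|∑ x : Fin (2 * m) → ZMod 2, χ (f x + ip α x)| ^ 2) :=
        (Real.sqrt_sq (abs_nonneg _)).symm
    _ = Real.sqrt (((2 : ℝ) ^ m) ^ 2) := by rw [h2]
    _ = 2 ^ m := Real.sqrt_sq (by positivity)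

/-- The orthogonal complement of `V` w.r.t. the dot product. -/
def perp (V : Submodule (ZMod 2) (Fin n → ZMod 2)) : Submodule (ZMod 2) (Fin n → ZMod 2) where
  carrier := {α | ∀ v ∈ V, ip α v = 0}
  add_mem' := by
    intro a b ha hb v hv
    rw [ip_add_left, ha v hv, hb v hv, add_zero]
  zero_mem' := by intro v hv; simp [ip]
  smul_mem' := by
    intro c a ha v hv
    rcases zmod2_cases c with rfl | rfl
    · simp [ip]
    · rw [one_smul]; exact ha v hv

lemma mem_perp {V : Submodule (ZMod 2) (Fin n → ZMod 2)} {α : Fin n → ZMod 2} :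
    α ∈ perp V ↔ ∀ v ∈ V, ip α v = 0 := Iff.rfl

lemma sum_chi_sub (W : Submodule (ZMod 2) (Fin n → ZMod 2)) (z : Fin n → ZMod 2) :
    ∑ α : W, χ (ip (α : Fin n → ZMod 2) z)
      = if ∀ α ∈ W, ip α z = 0 then (Fintype.card W : ℝ) else 0 := by
  split_ifs with h
  · rw [Finset.sum_congr rfl fun α _ => by
      rw [h (α : Fin n → ZMod 2) α.2, χ_zero]]
    simp [Finset.card_univ]
  · push_neg at h
    obtain ⟨α₀, hα₀W, hα₀⟩ := h
    have hα₀1 : ip α₀ z = 1 := by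
      rcases zmod2_cases (ip α₀ z) with h' | h'
      · exact absurd h' hα₀
      · exact h'
    have key : ∑ α : W, χ (ip (α : Fin n → ZMod 2) z)
        = ∑ α : W, χ (ip ((⟨α₀, hα₀W⟩ + α : W) : Fin n → ZMod 2) z) :=
      (Fintype.sum_equiv (Equiv.addLeft (⟨α₀, hα₀W⟩ : W)) _ _ (fun α => rfl)).symm
    have hneg : ∀ α : W, χ (ip ((⟨α₀, hα₀W⟩ + α : W) : Fin n → ZMod 2) z)
        = - χ (ip (α : Fin n → ZMod 2) z) := by
      intro α
      have : ((⟨α₀, hα₀W⟩ + α : W) : Fin n → ZMod 2) = α₀ + (α : Fin n → ZMod 2) := rfl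
      rw [this, ip_add_left, χ_add, hα₀1, χ_one]; ring
    have h2 : ∑ α : W, χ (ip (α : Fin n → ZMod 2) z)
        = -∑ α : W, χ (ip (α : Fin n → ZMod 2) z) := by
      conv_lhs => rw [key, Finset.sum_congr rfl (fun α _ => hneg α)]
      rw [Finset.sum_neg_distrib]
    linarith

lemma sum_chi_perp (V : Submodule (ZMod 2) (Fin n → ZMod 2)) (z : Fin n → ZMod 2) :
    ∑ α : perp V, χ (ip (α : Fin n → ZMod 2) z)
      = if z ∈ V then (Fintype.card (perp V) : ℝ) else 0 := by
  have hiff : (∀ α ∈ perp V, ip α z = 0) ↔ z ∈ V := by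
    constructor
    · intro h
      by_contra hz
      obtain ⟨α, hαV, hαz⟩ := sep V hz
      have := h α (mem_perp.mpr hαV)
      rw [hαz] at this
      exact one_ne_zero this
    · intro hz α hα
      exact mem_perp.mp hα z hz
  rw [sum_chi_sub, if_congr hiff rfl rfl]

lemma mem_coset_iff (V : Submodule (ZMod 2) (Fin n → ZMod 2)) (b x : Fin n → ZMod 2) :
    x ∈ (fun v => v + b) '' (V : Set (Fin n → ZMod 2)) ↔ x + b ∈ V := by
  constructor
  · rintro ⟨v, hv, rfl⟩
    have : v + b + b = v := by rw [add_assoc, vec_add_self, add_zero]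
    rwa [this]
  · intro h
    exact ⟨x + b, h, by show x + b + b = x; rw [add_assoc, vec_add_self, add_zero]⟩

lemma coset_sum_bound {m : ℕ} (f : (Fin (2 * m) → ZMod 2) → ZMod 2) (hf : IsBent f)
    (V : Submodule (ZMod 2) (Fin (2 * m) → ZMod 2)) (b : Fin (2 * m) → ZMod 2) :
    |∑ x ∈ ((fun v => v + b) '' (V : Set (Fin (2 * m) → ZMod 2))).toFinset,
        (-1 : ℝ) ^ (f x).val| ≤ 2 ^ m := by
  show |∑ x ∈ ((fun v => v + b) '' (V : Set (Fin (2 * m) → ZMod 2))).toFinset, χ (f x)| ≤ 2 ^ m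
  set S := (fun v => v + b) '' (V : Set (Fin (2 * m) → ZMod 2)) with hS
  set W := perp V with hW
  have cardpos : (0 : ℝ) < (Fintype.card W : ℝ) := by
    exact_mod_cast Fintype.card_pos
  have identity : ∑ α : W, χ (ip (α : Fin (2*m) → ZMod 2) b)
        * (∑ x : Fin (2*m) → ZMod 2, χ (f x + ip (α : Fin (2*m) → ZMod 2) x))
      = (Fintype.card W : ℝ) * ∑ x ∈ S.toFinset, χ (f x) := by
    calc ∑ α : W, χ (ip (α : Fin (2*m) → ZMod 2) b)
          * (∑ x : Fin (2*m) → ZMod 2, χ (f x + ip (α : Fin (2*m) → ZMod 2) x))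
        = ∑ α : W, ∑ x : Fin (2*m) → ZMod 2,
            χ (f x) * χ (ip (α : Fin (2*m) → ZMod 2) (x + b)) := by
          refine Finset.sum_congr rfl fun α _ => ?_
          rw [Finset.mul_sum]
          refine Finset.sum_congr rfl fun x _ => ?_
          rw [χ_add, ip_add_right, χ_add]; ring
      _ = ∑ x : Fin (2*m) → ZMod 2,
            χ (f x) * ∑ α : W, χ (ip (α : Fin (2*m) → ZMod 2) (x + b)) := by
          rw [Finset.sum_comm]
          exact Finset.sum_congr rfl fun x _ => (Finset.mul_sum _ _ _).symm
      _ = ∑ x : Fin (2*m) → ZMod 2,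
            χ (f x) * (if x + b ∈ V then (Fintype.card W : ℝ) else 0) := by
          exact Finset.sum_congr rfl fun x _ => by rw [sum_chi_perp]
      _ = ∑ x ∈ Finset.univ.filter (fun x => x + b ∈ V),
            (Fintype.card W : ℝ) * χ (f x) := by
          rw [Finset.sum_filter]
          refine Finset.sum_congr rfl fun x _ => ?_
          split_ifs <;> ring
      _ = (Fintype.card W : ℝ) * ∑ x ∈ S.toFinset, χ (f x) := by
          rw [← Finset.mul_sum]
          congr 1
          refine Finset.sum_congr ?_ fun _ _ => rfl
          ext x
          simp only [Finset.mem_filter, Finset.mem_univ, true_and, Set.mem_toFinset]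
          exact (mem_coset_iff V b x).symm
  have hbound : |∑ α : W, χ (ip (α : Fin (2*m) → ZMod 2) b)
        * (∑ x : Fin (2*m) → ZMod 2, χ (f x + ip (α : Fin (2*m) → ZMod 2) x))|
      ≤ (Fintype.card W : ℝ) * 2 ^ m := by
    calc |∑ α : W, χ (ip (α : Fin (2*m) → ZMod 2) b)
          * (∑ x : Fin (2*m) → ZMod 2, χ (f x + ip (α : Fin (2*m) → ZMod 2) x))|
        ≤ ∑ α : W, |χ (ip (α : Fin (2*m) → ZMod 2) b)
          * (∑ x : Fin (2*m) → ZMod 2, χ (f x + ip (α : Fin (2*m) → ZMod 2) x))| :=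
          Finset.abs_sum_le_sum_abs _ _
      _ = ∑ α : W, (2 : ℝ) ^ m := by
          refine Finset.sum_congr rfl fun α _ => ?_
          rw [abs_mul, abs_χ, one_mul, bent_abs f hf]
      _ = (Fintype.card W : ℝ) * 2 ^ m := by
          rw [Finset.sum_const, Finset.card_univ, nsmul_eq_mul]
  rw [identity, abs_mul, abs_of_pos cardpos] at hbound
  exact le_of_mul_le_mul_left hbound cardpos

lemma coset_card (V : Submodule (ZMod 2) (Fin n → ZMod 2)) (b : Fin n → ZMod 2) :
    (((fun v => v + b) '' (V : Set (Fin n → ZMod 2))).toFinset.card : ℕ)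
      = 2 ^ (Module.finrank (ZMod 2) V) := by
  rw [Set.toFinset_image, Finset.card_image_of_injective _ (add_left_injective b),
    Set.toFinset_card]
  have := Module.card_eq_pow_finrank (K := ZMod 2) (V := V)
  rwa [ZMod.card] at this

lemma toFinset_eq {E : Type*} (S : Set E) (i1 i2 : Fintype ↥S) :
    @Set.toFinset _ S i1 = @Set.toFinset _ S i2 := by
  have : i1 = i2 := Subsingleton.elim _ _
  subst this
  rfl

lemma biasSet_eq {E : Type*} [Fintype E] (f : E → ZMod 2) (S : Set E) (inst : Fintype ↥S) :
    biasSet f S = |∑ x ∈ @Set.toFinset _ S inst, (-1 : ℝ) ^ (f x).val|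
      / ((@Set.toFinset _ S inst).card : ℝ) := by
  unfold biasSet
  rw [toFinset_eq S _ inst]

end BentAux

set_option maxHeartbeats 1000000 in
/-- Let `n = 2m` be even, `f : 𝔽₂ⁿ → 𝔽₂` a bent function, and `c ≥ 1` an integer.
Then `f` is an affine extractor for dimension `m + c` with bias at most `2^{-c}`;
in particular, `f` is an affine disperser for dimension `m + 1`. -/
theorem bent_affine_extractor {m c : ℕ} (hc : 1 ≤ c)
    (f : (Fin (2 * m) → ZMod 2) → ZMod 2) (hf : IsBent f) :
    (∀ (V : Submodule (ZMod 2) (Fin (2 * m) → ZMod 2)) (b : Fin (2 * m) → ZMod 2),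
      m + c ≤ Module.finrank (ZMod 2) V →
        biasSet f ((fun v => v + b) '' (V : Set (Fin (2 * m) → ZMod 2))) ≤ (2 : ℝ)⁻¹ ^ c) ∧
    (∀ (V : Submodule (ZMod 2) (Fin (2 * m) → ZMod 2)) (b : Fin (2 * m) → ZMod 2),
      m + 1 ≤ Module.finrank (ZMod 2) V →
        ∃ x ∈ (fun v => v + b) '' (V : Set (Fin (2 * m) → ZMod 2)),
          ∃ y ∈ (fun v => v + b) '' (V : Set (Fin (2 * m) → ZMod 2)), f x ≠ f y) := by
  have key1 : ∀ (V : Submodule (ZMod 2) (Fin (2 * m) → ZMod 2)) (b : Fin (2 * m) → ZMod 2)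
      (c' : ℕ), m + c' ≤ Module.finrank (ZMod 2) V →
      biasSet f ((fun v => v + b) '' (V : Set (Fin (2 * m) → ZMod 2))) ≤ (2 : ℝ)⁻¹ ^ c' := by
    intro V b c' hd
    have habs := BentAux.coset_sum_bound f hf V b
    have hcard := BentAux.coset_card V b
    have hcardR : ((((fun v => v + b) '' (V : Set (Fin (2 * m) → ZMod 2))).toFinset.card : ℕ) : ℝ)
        = 2 ^ (Module.finrank (ZMod 2) V) := by
      exact_mod_cast hcard
    have hge : (2 : ℝ) ^ (m + c')
        ≤ ((((fun v => v + b) '' (V : Set (Fin (2 * m) → ZMod 2))).toFinset.card : ℕ) : ℝ) := by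
      rw [hcardR]
      exact pow_le_pow_right₀ (by norm_num) hd
    have : biasSet f ((fun v => v + b) '' (V : Set (Fin (2 * m) → ZMod 2)))
        ≤ (2 : ℝ) ^ m / (2 : ℝ) ^ (m + c') := by
      have h2 : (0:ℝ) < 2 ^ (m + c') := by positivity
      have h1 : (0:ℝ) ≤ 2 ^ m := by positivity
      rw [BentAux.biasSet_eq f _ _]
      exact div_le_div₀ h1 habs h2 hge
    refine this.trans (le_of_eq ?_)
    rw [pow_add, inv_pow]
    field_simp
  refine ⟨fun V b hd => key1 V b c hd, ?_⟩
  intro V b hd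
  by_contra hcon
  push_neg at hcon
  have hbmem : b ∈ (fun v => v + b) '' (V : Set (Fin (2 * m) → ZMod 2)) :=
    ⟨0, V.zero_mem, by simp⟩
  have hconst : ∀ x ∈ ((fun v => v + b) '' (V : Set (Fin (2 * m) → ZMod 2))).toFinset,
      ((-1 : ℝ) ^ (f x).val) = (-1 : ℝ) ^ (f b).val := by
    intro x hx
    rw [hcon x (Set.mem_toFinset.mp hx) b hbmem]
  have hsum : ∑ x ∈ ((fun v => v + b) '' (V : Set (Fin (2 * m) → ZMod 2))).toFinset,
      (-1 : ℝ) ^ (f x).val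
      = ((((fun v => v + b) '' (V : Set (Fin (2 * m) → ZMod 2))).toFinset.card : ℕ) : ℝ)
        * (-1 : ℝ) ^ (f b).val := by
    rw [Finset.sum_congr rfl hconst, Finset.sum_const, nsmul_eq_mul]
  have habs1 : |(-1 : ℝ) ^ (f b).val| = 1 := BentAux.abs_χ (f b)
  have hbound := BentAux.coset_sum_bound f hf V b
  rw [hsum, abs_mul, habs1, mul_one, abs_of_nonneg (by positivity)] at hbound
  have hcard := BentAux.coset_card V b
  have hcardR : ((((fun v => v + b) '' (V : Set (Fin (2 * m) → ZMod 2))).toFinset.card : ℕ) : ℝ)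
      = 2 ^ (Module.finrank (ZMod 2) V) := by
    exact_mod_cast hcard
  rw [hcardR] at hbound
  have : (2 : ℝ) ^ (m + 1) ≤ (2 : ℝ) ^ (Module.finrank (ZMod 2) V) :=
    pow_le_pow_right₀ (by norm_num) hd
  have hlt : (2 : ℝ) ^ m < (2 : ℝ) ^ (m + 1) := by
    apply pow_lt_pow_right₀ (by norm_num)
    omega
  linarith
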